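/- Let ν be a locally finite positive measure on ℝⁿ supported outside the double 2B of a ball B, let ω be supported in B, and let 0 ≤ α < n. Then for the α-fractional Riesz transform R^{α,n} with kernel (y-x)/|y-x|^{n+1-α}, ∫_{ℝⁿ∖2B} | ∫_B |x-y|^{α-n} g(x) dω(x) |² dν(y) ≤ C ‖g‖²_{L²(ω)} · (|B|_ω / |B|^{1-α/n}) · P^α(B, ν), where P^α(B,ν) = ∫ ( |B|^{1/n} / (|B|^{1/n} + |y - c_B|)² )^{n-α} dν(y) is the reproducing Poisson integral. -/

import Mathlib

open MeasureTheory
open Metric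
open scoped ENNReal

/-- `|B|^{1/n}`, the `n`-th root of the Lebesgue measure of the ball `B(c,r)`. -/
noncomputable def ballSide (n : ℕ) (c : EuclideanSpace ℝ (Fin n)) (r : ℝ) : ℝ :=
  (volume (Metric.ball c r)).toReal ^ (1 / (n : ℝ))

/-- Tail estimate: if `ω` is supported in a ball `B` and `ν` is supported outside
the double `2B`, then
`∫_{ℝⁿ∖2B} |∫_B |x-y|^{α-n} g dω|² dν ≤ C ‖g‖²_{L²(ω)} (|B|_ω/|B|^{1-α/n}) 𝒫^α(B,ν)`,
where `𝒫^α` is the reproducing Poisson integral. -/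
lemma aux_real {κ r d s α nn : ℝ} (hκ : 0 < κ) (hr : 0 < r) (hd : 2*r ≤ d)
    (hs : s = κ * r) (hβ : 0 < nn - α) :
    ((d/2) ^ (α - nn))^2 * s ^ (nn - α) ≤ (κ+2) ^ (2*(nn-α)) * (s/(s+d)^2) ^ (nn - α) := by
  set β := nn - α with hβdef
  have hd2 : 0 < d/2 := by linarith
  have hs0 : 0 < s := by rw [hs]; positivity
  have hsd : 0 < s + d := by linarith
  have hαβ : α - nn = -β := by ring
  have hL : ((d/2) ^ (α - nn))^2 * s ^ β = ((d/2) ^ (-2:ℝ) * s) ^ β := by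
    rw [hαβ, Real.mul_rpow (by positivity) hs0.le, ← Real.rpow_natCast ((d/2) ^ (-β)) 2,
      ← Real.rpow_mul hd2.le, ← Real.rpow_mul hd2.le]
    congr 2
    push_cast; ring
  have hR : (κ+2) ^ (2*β) * (s/(s+d)^2) ^ β = ((κ+2)^(2:ℝ) * (s/(s+d)^2)) ^ β := by
    rw [Real.mul_rpow (by positivity) (by positivity), ← Real.rpow_mul (by positivity)]
  rw [hL, hR]
  apply Real.rpow_le_rpow (by positivity) _ hβ.le
  have e2 : (d/2)^(-2:ℝ) = ((d/2)^(2:ℕ))⁻¹ := by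
    rw [Real.rpow_neg hd2.le, show ((2:ℝ)) = ((2:ℕ):ℝ) from by norm_num, Real.rpow_natCast]
  have e3 : (κ+2)^(2:ℝ) = (κ+2)^(2:ℕ) := by
    rw [show ((2:ℝ)) = ((2:ℕ):ℝ) from by norm_num, Real.rpow_natCast]
  have h1 : s + d ≤ (κ+2)*(d/2) := by nlinarith
  have h2 : (s+d)^2 ≤ ((κ+2)*(d/2))^2 := by nlinarith
  have h3 : s * (s+d)^2 ≤ s * ((κ+2)*(d/2))^2 := mul_le_mul_of_nonneg_left h2 hs0.le
  have e4 : (κ+2)^(2:ℕ) * (s/(s+d)^2) = ((κ+2)^(2:ℕ)*s)/(s+d)^2 := by ring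
  rw [e2, e3, inv_mul_eq_div, e4, div_le_div_iff₀ (by positivity) (by positivity)]
  nlinarith [h3]

theorem tail_estimate_A2 {n : ℕ} (hn : 0 < n) (α : ℝ) (hα0 : 0 ≤ α) (hαn : α < n) :
    ∃ C : ℝ≥0∞, C ≠ ⊤ ∧
      ∀ (c : EuclideanSpace ℝ (Fin n)) (r : ℝ), 0 < r →
      ∀ (ω ν : Measure (EuclideanSpace ℝ (Fin n))),
        IsLocallyFiniteMeasure ω → IsLocallyFiniteMeasure ν →
        ω (Metric.ball c r)ᶜ = 0 → ν (Metric.ball c (2 * r)) = 0 →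
        ∀ g : EuclideanSpace ℝ (Fin n) → ℝ≥0∞, Measurable g →
          (∫⁻ y, (∫⁻ x in Metric.ball c r,
              ENNReal.ofReal (dist x y ^ (α - (n : ℝ))) * g x ∂ω) ^ 2 ∂ν) ≤
            C * (∫⁻ x, (g x) ^ 2 ∂ω) *
              (ω (Metric.ball c r) /
                ENNReal.ofReal ((volume (Metric.ball c r)).toReal ^ (1 - α / (n : ℝ)))) *
              (∫⁻ y, ENNReal.ofReal
                ((ballSide n c r / (ballSide n c r + dist y c) ^ 2) ^ ((n : ℝ) - α)) ∂ν) := by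
  have hn' : (0:ℝ) < n := by exact_mod_cast hn
  have hβ : (0:ℝ) < (n:ℝ) - α := by linarith
  set V : ℝ≥0∞ := volume (ball (0 : EuclideanSpace ℝ (Fin n)) 1) with hV
  set κ : ℝ := V.toReal ^ (1/(n:ℝ)) with hκdef
  have hVpos : 0 < V := measure_ball_pos _ _ one_pos
  have hVtop : V < ⊤ := measure_ball_lt_top
  have hVr : 0 < V.toReal := ENNReal.toReal_pos hVpos.ne' hVtop.ne
  have hκ : 0 < κ := Real.rpow_pos_of_pos hVr _
  refine ⟨ENNReal.ofReal ((κ+2) ^ (2*((n:ℝ)-α))), ENNReal.ofReal_ne_top, ?_⟩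
  intro c r hr ω ν _ _ hω hν g hg
  set C : ℝ≥0∞ := ENNReal.ofReal ((κ+2) ^ (2*((n:ℝ)-α))) with hC
  set B := ball c r with hB
  set s := ballSide n c r with hs
  set A := ∫⁻ x, g x ^ 2 ∂ω with hA
  set W := ω B with hW
  set S := ENNReal.ofReal ((volume B).toReal ^ (1 - α/(n:ℝ))) with hS
  -- volume of the ball
  have hvol : volume B = ENNReal.ofReal (r ^ n) * V := by
    have h := Measure.addHaar_ball_of_pos (volume : Measure (EuclideanSpace ℝ (Fin n))) c hr
    rwa [finrank_euclideanSpace_fin] at h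
  have hvolr : (volume B).toReal = r ^ n * V.toReal := by
    rw [hvol, ENNReal.toReal_mul, ENNReal.toReal_ofReal (by positivity)]
  have hvolpos : 0 < (volume B).toReal := by rw [hvolr]; positivity
  have hsκ : s = κ * r := by
    rw [hs, ballSide, hvolr, Real.mul_rpow (by positivity) hVr.le,
      ← Real.rpow_natCast r n, ← Real.rpow_mul hr.le]
    rw [mul_one_div, div_self hn'.ne', Real.rpow_one, mul_comm]
  have hsS : s ^ ((n:ℝ) - α) = (volume B).toReal ^ (1 - α/(n:ℝ)) := by
    rw [hs, ballSide, ← Real.rpow_mul hvolpos.le]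
    congr 1
    field_simp
  have hS0 : S ≠ 0 := by
    rw [hS]
    simp only [ne_eq, ENNReal.ofReal_eq_zero, not_le]
    positivity
  have hStop : S ≠ ⊤ := ENNReal.ofReal_ne_top
  -- pointwise bound
  have key : ∀ y : EuclideanSpace ℝ (Fin n), 2*r ≤ dist y c →
      (∫⁻ x in B, ENNReal.ofReal (dist x y ^ (α - (n:ℝ))) * g x ∂ω) ^ 2 ≤
        C * A * (W / S) *
          ENNReal.ofReal ((s / (s + dist y c) ^ 2) ^ ((n:ℝ) - α)) := by
    intro y hdy
    set d := dist y c with hd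
    have hd2 : 0 < d/2 := by linarith
    set t : ℝ := (d/2) ^ (α - (n:ℝ)) with ht
    have ht0 : 0 ≤ t := Real.rpow_nonneg hd2.le _
    -- step 1: bound the kernel
    have step1 : (∫⁻ x in B, ENNReal.ofReal (dist x y ^ (α - (n:ℝ))) * g x ∂ω) ≤
        ENNReal.ofReal t * ∫⁻ x in B, g x ∂ω := by
      rw [← lintegral_const_mul' _ _ ENNReal.ofReal_ne_top]
      refine setLIntegral_mono (by fun_prop) ?_
      intro x hx
      refine mul_le_mul_left (ENNReal.ofReal_le_ofReal ?_) _
      refine Real.rpow_le_rpow_of_nonpos hd2 ?_ (by linarith)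
      have h1 : dist x c < r := mem_ball.1 hx
      have h2 : d ≤ dist y x + dist x c := dist_triangle y x c
      have h3 : dist y x = dist x y := dist_comm y x
      linarith
    -- step 2: Cauchy-Schwarz
    have step2 : (∫⁻ x in B, g x ∂ω) ≤ A ^ (1/2:ℝ) * W ^ (1/2:ℝ) := by
      have hconj : Real.HolderConjugate 2 2 := Real.holderConjugate_iff.2 ⟨one_lt_two, by norm_num⟩
      have := ENNReal.lintegral_mul_le_Lp_mul_Lq (ω.restrict B) hconj
        hg.aemeasurable (aemeasurable_const (b := (1:ℝ≥0∞)))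
      simp only [Pi.mul_apply, mul_one, ENNReal.one_rpow] at this
      refine this.trans ?_
      rw [setLIntegral_one]
      refine mul_le_mul_left (ENNReal.rpow_le_rpow ?_ (by norm_num)) _
      refine (setLIntegral_le_lintegral _ _).trans ?_
      refine le_of_eq (lintegral_congr fun x => ?_)
      rw [show ((2:ℝ)) = ((2:ℕ):ℝ) from by norm_num, ENNReal.rpow_natCast]
    -- combine and square
    have sq2 : ∀ z : ℝ≥0∞, (z ^ (1/2:ℝ)) ^ 2 = z := by
      intro z
      rw [← ENNReal.rpow_natCast (z ^ (1/2:ℝ)) 2, ← ENNReal.rpow_mul]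
      norm_num
    have step3 : (∫⁻ x in B, ENNReal.ofReal (dist x y ^ (α - (n:ℝ))) * g x ∂ω) ^ 2 ≤
        ENNReal.ofReal t ^ 2 * A * W := by
      calc (∫⁻ x in B, ENNReal.ofReal (dist x y ^ (α - (n:ℝ))) * g x ∂ω) ^ 2
          ≤ (ENNReal.ofReal t * (A ^ (1/2:ℝ) * W ^ (1/2:ℝ))) ^ 2 := by
            gcongr
            exact step1.trans (mul_le_mul_right step2 _)
        _ = ENNReal.ofReal t ^ 2 * ((A ^ (1/2:ℝ)) ^ 2 * (W ^ (1/2:ℝ)) ^ 2) := by ring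
        _ = ENNReal.ofReal t ^ 2 * A * W := by rw [sq2, sq2]; ring
    -- the key comparison of constants
    have hcmp : ENNReal.ofReal t ^ 2 * S ≤
        C * ENNReal.ofReal ((s / (s + d) ^ 2) ^ ((n:ℝ) - α)) := by
      rw [hS, ← hsS, ← ENNReal.ofReal_pow ht0, ← ENNReal.ofReal_mul (by positivity),
        hC, ← ENNReal.ofReal_mul (by positivity)]
      exact ENNReal.ofReal_le_ofReal (aux_real hκ hr hdy hsκ hβ)
    refine step3.trans ?_
    have hWeq : ENNReal.ofReal t ^ 2 * S * A * (W/S) = ENNReal.ofReal t ^ 2 * A * (W/S*S) := by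
      ring
    rw [ENNReal.div_mul_cancel hS0 hStop] at hWeq
    calc ENNReal.ofReal t ^ 2 * A * W
        = ENNReal.ofReal t ^ 2 * S * A * (W/S) := hWeq.symm
      _ ≤ C * ENNReal.ofReal ((s / (s + d) ^ 2) ^ ((n:ℝ) - α)) * A * (W/S) := by
          gcongr
      _ = C * A * (W/S) * ENNReal.ofReal ((s / (s + d) ^ 2) ^ ((n:ℝ) - α)) := by ring
  -- measurability of the Poisson integrand
  have hPmeas : Measurable fun y : EuclideanSpace ℝ (Fin n) =>
      ENNReal.ofReal ((s / (s + dist y c) ^ 2) ^ ((n:ℝ) - α)) := by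
    fun_prop
  -- a.e. bound and conclusion
  have hae : ∀ᵐ y ∂ν, y ∉ ball c (2*r) := measure_eq_zero_iff_ae_notMem.1 hν
  calc (∫⁻ y, (∫⁻ x in B, ENNReal.ofReal (dist x y ^ (α - (n:ℝ))) * g x ∂ω) ^ 2 ∂ν)
      ≤ ∫⁻ y, C * A * (W/S) *
          ENNReal.ofReal ((s / (s + dist y c) ^ 2) ^ ((n:ℝ) - α)) ∂ν := by
        refine lintegral_mono_ae (hae.mono fun y hy => ?_)
        exact key y (by simpa [dist_comm, not_lt] using (mem_ball.not.1 hy))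
    _ = C * A * (W/S) *
          ∫⁻ y, ENNReal.ofReal ((s / (s + dist y c) ^ 2) ^ ((n:ℝ) - α)) ∂ν :=
        lintegral_const_mul _ hPmeas
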